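/- Let a locally compact group $G$ act freely and properly on a topological graph $E = (E^0, E^1, s, r)$, let $q_1 : E^1 \to E^1/G$ be the quotient map, and let $K \subseteq E^1/G$ be compact. Then for every compact $L \subseteq E^0$, both $q_1^{-1}(K) \cap r^{-1}(L)$ and $q_1^{-1}(K) \cap s^{-1}(L)$ are compact subsets of $E^1$. -/

import Mathlib

open Set

/-- A compact set in the target of an open surjection from a locally compact space is
contained in the image of a compact set. -/
lemma exists_compact_image_superset {X Y : Type*} [TopologicalSpace X] [TopologicalSpace Y]
    [LocallyCompactSpace X] {q : X → Y} (hqo : IsOpenMap q) (hqs : Function.Surjective q)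
    {K : Set Y} (hK : IsCompact K) : ∃ C : Set X, IsCompact C ∧ K ⊆ q '' C := by
  -- choose for each x a compact neighborhood
  have h : ∀ x : X, ∃ N : Set X, IsCompact N ∧ N ∈ nhds x :=
    fun x => exists_compact_mem_nhds x
  choose N hNc hNn using h
  choose f hf using hqs
  -- open cover of K by images of interiors
  have hcover : K ⊆ ⋃ y : Y, q '' interior (N (f y)) := by
    intro y _
    exact mem_iUnion.2 ⟨y, f y, mem_interior_iff_mem_nhds.2 (hNn (f y)), hf y⟩
  obtain ⟨t, ht⟩ := hK.elim_finite_subcover (fun y => q '' interior (N (f y)))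
    (fun y => hqo _ isOpen_interior) hcover
  refine ⟨⋃ y ∈ t, N (f y), t.isCompact_biUnion (fun y _ => hNc _), ?_⟩
  intro y hy
  obtain ⟨z, hz, x, hx, hqx⟩ := mem_iUnion₂.1 (ht hy)
  exact ⟨x, mem_iUnion₂.2 ⟨z, hz, interior_subset hx⟩, hqx⟩

/-- If a locally compact group `G` acts freely and properly on a topological
graph `E = (E⁰, E¹, s, r)`, `q₁ : E¹ → E¹/G` is the quotient map and `K ⊆ E¹/G` is compact,
then for every compact `L ⊆ E⁰` both `q₁⁻¹(K) ∩ r⁻¹(L)` and `q₁⁻¹(K) ∩ s⁻¹(L)` are compact. -/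
theorem stmt5 {G E0 E1 : Type*} [Group G] [TopologicalSpace G]
    [T2Space G] [LocallyCompactSpace G] [IsTopologicalGroup G]
    [TopologicalSpace E0] [TopologicalSpace E1]
    [T2Space E0] [T2Space E1] [LocallyCompactSpace E0] [LocallyCompactSpace E1]
    [MulAction G E0] [MulAction G E1]
    (hc0 : Continuous fun p : G × E0 => p.1 • p.2)
    (hc1 : Continuous fun p : G × E1 => p.1 • p.2)
    (hfree0 : ∀ (g : G) (v : E0), g • v = v → g = 1)
    (hfree1 : ∀ (g : G) (e : E1), g • e = e → g = 1)
    (hprop0 : IsProperMap fun gp : G × E0 => (gp.1 • gp.2, gp.2))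
    (hprop1 : IsProperMap fun gp : G × E1 => (gp.1 • gp.2, gp.2))
    (s r : E1 → E0) (hs : IsLocalHomeomorph s) (hr : Continuous r)
    (hseq : ∀ (g : G) (e : E1), s (g • e) = g • s e)
    (hreq : ∀ (g : G) (e : E1), r (g • e) = g • r e)
    (K : Set (Quotient (MulAction.orbitRel G E1))) (hK : IsCompact K)
    (L : Set E0) (hL : IsCompact L) :
    IsCompact ((Quotient.mk (MulAction.orbitRel G E1) ⁻¹' K) ∩ r ⁻¹' L) ∧
    IsCompact ((Quotient.mk (MulAction.orbitRel G E1) ⁻¹' K) ∩ s ⁻¹' L) := by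
  haveI : ContinuousSMul G E1 := ⟨hc1⟩
  haveI : ProperSMul G E1 := ⟨hprop1⟩
  haveI : T2Space (Quotient (MulAction.orbitRel G E1)) :=
    t2Space_quotient_mulAction_of_properSMul
  set q : E1 → Quotient (MulAction.orbitRel G E1) := Quotient.mk (MulAction.orbitRel G E1)
  have hqo : IsOpenMap q := MulAction.isOpenQuotientMap_quotientMk.isOpenMap
  have hqc : Continuous q := continuous_quotient_mk'
  obtain ⟨C, hCc, hKC⟩ := exists_compact_image_superset hqo
    (fun y => Quotient.inductionOn y fun e => ⟨e, rfl⟩) hK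
  -- generic claim for any equivariant continuous map f : E1 → E0
  have main : ∀ f : E1 → E0, Continuous f → (∀ (g : G) (e : E1), f (g • e) = g • f e) →
      IsCompact ((q ⁻¹' K) ∩ f ⁻¹' L) := by
    intro f hf hfeq
    have hclosed : IsClosed ((q ⁻¹' K) ∩ f ⁻¹' L) :=
      (hK.isClosed.preimage hqc).inter (hL.isClosed.preimage hf)
    -- the set of group elements moving f '' C into L
    have hprop : IsCompact ((fun gp : G × E0 => (gp.1 • gp.2, gp.2)) ⁻¹' (L ×ˢ (f '' C))) :=
      hprop0.isCompact_preimage (hL.prod (hCc.image hf))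
    have hT : IsCompact (Prod.fst '' ((fun gp : G × E0 => (gp.1 • gp.2, gp.2)) ⁻¹'
        (L ×ˢ (f '' C)))) := hprop.image continuous_fst
    set T := Prod.fst '' ((fun gp : G × E0 => (gp.1 • gp.2, gp.2)) ⁻¹' (L ×ˢ (f '' C)))
    have hbig : IsCompact ((fun gp : G × E1 => gp.1 • gp.2) '' (T ×ˢ C)) :=
      (hT.prod hCc).image hc1
    refine hbig.of_isClosed_subset hclosed ?_
    rintro e ⟨heK, heL⟩
    obtain ⟨c, hcC, hqc'⟩ := hKC heK
    have hrel : (MulAction.orbitRel G E1).r e c := Quotient.eq''.mp (hqc'.symm : q e = q c)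
    obtain ⟨g, hg⟩ := hrel
    -- g • c = e
    have hge : g • c = e := hg
    have hgT : g ∈ T := by
      refine ⟨(g, f c), ?_, rfl⟩
      refine ⟨?_, ⟨c, hcC, rfl⟩⟩
      show g • f c ∈ L
      rw [← hfeq, hge]
      exact heL
    exact ⟨(g, c), ⟨hgT, hcC⟩, hge⟩
  exact ⟨main r hr hreq, main s hs.continuous hseq⟩
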